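/- Let 1 → Z → E →f→ G → 1 be a short exact sequence with Z, G finitely generated and E given the word metric on S_Z ∪ Ŝ_G (lifts of the generators of G), G the word metric on S_G. If s' : G → E is a controlled map with f ∘ s' κ-close to the identity on G, then there exists a Lipschitz map s : G → E with f ∘ s = id_G and s κ-close to s'. -/

import Mathlib

open scoped ENNReal NNReal
open Filter

namespace CoarseStmt

variable {α β : Type*}

/-- Two maps into a space with extended distance `dB` are close if pointwise
distances of images are uniformly bounded by some finite constant. -/
def Close (dB : β → β → ℝ≥0∞) (f g : α → β) : Prop :=
  ∃ κ : ℝ≥0, ∀ x, dB (f x) (g x) ≤ κ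

/-- `ρ` is an upper control for `f`: increasing, proper, and
`dB (f x) (f x') ≤ ρ (dA x x')` whenever `dA x x'` is finite. -/
def IsUpperControl (dA : α → α → ℝ≥0∞) (dB : β → β → ℝ≥0∞) (f : α → β)
    (ρ : ℝ≥0 → ℝ≥0) : Prop :=
  Monotone ρ ∧ Tendsto ρ atTop atTop ∧
    ∀ x x', dA x x' ≠ ⊤ → dB (f x) (f x') ≤ ρ (dA x x').toNNReal

/-- A map is controlled if it admits an upper control. -/
def Controlled (dA : α → α → ℝ≥0∞) (dB : β → β → ℝ≥0∞) (f : α → β) : Prop :=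
  ∃ ρ, IsUpperControl dA dB f ρ

/-- `θ` is a lower control for `f`: increasing, proper,
`θ (dA x x') ≤ dB (f x) (f x')`, with the convention that infinite distances
in the domain map to infinite distances in the codomain. -/
def IsLowerControl (dA : α → α → ℝ≥0∞) (dB : β → β → ℝ≥0∞) (f : α → β)
    (θ : ℝ≥0 → ℝ≥0) : Prop :=
  Monotone θ ∧ Tendsto θ atTop atTop ∧
    (∀ x x', dA x x' = ⊤ → dB (f x) (f x') = ⊤) ∧
    (∀ x x', dA x x' ≠ ⊤ → (θ (dA x x').toNNReal : ℝ≥0∞) ≤ dB (f x) (f x'))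

def HasLowerControl (dA : α → α → ℝ≥0∞) (dB : β → β → ℝ≥0∞) (f : α → β) : Prop :=
  ∃ θ, IsLowerControl dA dB f θ

/-- Some `r`-neighbourhood of the image is everything. -/
def CoarselySurjective (dB : β → β → ℝ≥0∞) (f : α → β) : Prop :=
  ∃ r : ℝ≥0, ∀ y, ∃ x, dB (f x) y ≤ r

/-- `f` admits an affine upper control. -/
def CoarselyLipschitz (dA : α → α → ℝ≥0∞) (dB : β → β → ℝ≥0∞) (f : α → β) : Prop :=
  ∃ a b : ℝ≥0, ∀ x x', dB (f x) (f x') ≤ (a : ℝ≥0∞) * dA x x' + b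

/-- A coarse equivalence: controlled, coarsely surjective, with a lower control. -/
def CoarseEquivalence (dA : α → α → ℝ≥0∞) (dB : β → β → ℝ≥0∞) (f : α → β) : Prop :=
  Controlled dA dB f ∧ CoarselySurjective dB f ∧ HasLowerControl dA dB f

/-- A quasi-isometry: affine upper and lower controls, coarsely surjective. -/
def QuasiIsometry (dA : α → α → ℝ≥0∞) (dB : β → β → ℝ≥0∞) (f : α → β) : Prop :=
  CoarselyLipschitz dA dB f ∧
    (∃ a b : ℝ≥0, ∀ x x', dA x x' ≤ (a : ℝ≥0∞) * dB (f x) (f x') + b) ∧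
    CoarselySurjective dB f

/-- Weighted path (pseudo)metric associated to an edge-weight function `E`
(`E u v = ⊤` means no edge): the infimum of total weights over finite chains. -/
noncomputable def pathDist {V : Type*} (E : V → V → ℝ≥0∞) (u v : V) : ℝ≥0∞ :=
  ⨅ (n : ℕ) (p : ℕ → V) (_ : p 0 = u) (_ : p n = v),
    ∑ i ∈ Finset.range n, E (p i) (p (i + 1))

end CoarseStmt

namespace CoarseStmt

/-- Word length with respect to a (symmetrised) generating set `S`:
the least length of a word in `S ∪ S⁻¹` representing `g` (or `⊤`). -/
noncomputable def wordLen {G : Type*} [Group G] (S : Set G) (g : G) : ℝ≥0∞ :=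
  ⨅ (l : List G) (_ : ∀ x ∈ l, x ∈ S ∨ x⁻¹ ∈ S) (_ : l.prod = g),
    (l.length : ℝ≥0∞)

/-- Left-invariant word metric associated to `S`. -/
noncomputable def wordDist {G : Type*} [Group G] (S : Set G) (a b : G) : ℝ≥0∞ :=
  wordLen S (a⁻¹ * b)

end CoarseStmt

namespace CoarseStmt

variable {G : Type*} [Group G] {S : Set G}

lemma wordLen_le (l : List G) (hl : ∀ x ∈ l, x ∈ S ∨ x⁻¹ ∈ S) :
    wordLen S l.prod ≤ (l.length : ℝ≥0∞) :=
  iInf_le_of_le l (iInf_le_of_le hl (iInf_le_of_le rfl le_rfl))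

lemma wordLen_exists_list {g : G} (h : wordLen S g ≠ ⊤) :
    ∃ l : List G, (∀ x ∈ l, x ∈ S ∨ x⁻¹ ∈ S) ∧ l.prod = g ∧
      (l.length : ℝ≥0∞) = wordLen S g := by
  have hne : ∃ l : List G, (∀ x ∈ l, x ∈ S ∨ x⁻¹ ∈ S) ∧ l.prod = g := by
    by_contra hc
    push_neg at hc
    apply h
    simp only [wordLen, iInf_eq_top]
    intro l hl hp
    exact absurd hp (hc l hl)
  set A : Set ℕ := {n | ∃ l : List G, (∀ x ∈ l, x ∈ S ∨ x⁻¹ ∈ S) ∧ l.prod = g ∧ l.length = n}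
    with hAdef
  have hA : A.Nonempty := by
    obtain ⟨l, h1, h2⟩ := hne
    exact ⟨l.length, l, h1, h2, rfl⟩
  obtain ⟨l, h1, h2, h3⟩ := Nat.sInf_mem hA
  refine ⟨l, h1, h2, le_antisymm ?_ ?_⟩
  · refine le_iInf fun l' => le_iInf fun hl' => le_iInf fun hp' => ?_
    rw [h3]
    have hmem : l'.length ∈ A := ⟨l', hl', hp', rfl⟩
    exact_mod_cast Nat.sInf_le hmem
  · rw [← h2]; exact wordLen_le l h1

lemma wordLen_inv_le (g : G) : wordLen S g⁻¹ ≤ wordLen S g := by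
  rcases eq_or_ne (wordLen S g) ⊤ with h | h
  · simp [h]
  obtain ⟨l, h1, h2, h3⟩ := wordLen_exists_list h
  rw [← h3]
  have hprod : ((l.map fun x => x⁻¹).reverse).prod = g⁻¹ := by
    rw [← h2, ← List.prod_inv_reverse]
  calc wordLen S g⁻¹ ≤ (((l.map fun x => x⁻¹).reverse).length : ℝ≥0∞) := by
        rw [← hprod]
        apply wordLen_le
        intro x hx
        simp only [List.mem_reverse, List.mem_map] at hx
        obtain ⟨y, hy, rfl⟩ := hx
        rcases h1 y hy with h | h
        · right; simpa
        · left; exact h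
    _ = (l.length : ℝ≥0∞) := by simp

lemma wordLen_inv (g : G) : wordLen S g⁻¹ = wordLen S g :=
  le_antisymm (wordLen_inv_le g) (by simpa using wordLen_inv_le (S := S) g⁻¹)

lemma wordDist_symm (a b : G) : wordDist S a b = wordDist S b a := by
  unfold wordDist
  rw [← wordLen_inv, mul_inv_rev, inv_inv]

lemma wordLen_mul_le (a b : G) : wordLen S (a * b) ≤ wordLen S a + wordLen S b := by
  rcases eq_or_ne (wordLen S a) ⊤ with h | h
  · simp [h]
  rcases eq_or_ne (wordLen S b) ⊤ with h' | h'
  · simp [h']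
  obtain ⟨l1, h11, h12, h13⟩ := wordLen_exists_list h
  obtain ⟨l2, h21, h22, h23⟩ := wordLen_exists_list h'
  calc wordLen S (a * b) ≤ ((l1 ++ l2).length : ℝ≥0∞) := by
        rw [← h12, ← h22, ← List.prod_append]
        apply wordLen_le
        intro x hx
        rcases List.mem_append.mp hx with h | h
        · exact h11 x h
        · exact h21 x h
    _ = (l1.length : ℝ≥0∞) + l2.length := by
        rw [List.length_append]; push_cast; ring
    _ = wordLen S a + wordLen S b := by rw [h13, h23]

lemma wordDist_triangle (a b c : G) :
    wordDist S a c ≤ wordDist S a b + wordDist S b c := by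
  unfold wordDist
  have : a⁻¹ * c = (a⁻¹ * b) * (b⁻¹ * c) := by group
  rw [this]
  exact wordLen_mul_le _ _

lemma wordDist_self (a : G) : wordDist S a a ≤ 0 := by
  have := wordLen_le (S := S) [] (by simp)
  simpa [wordDist] using this

lemma wordDist_chain (S : Set G) (p : ℕ → G) (n : ℕ) :
    wordDist S (p 0) (p n) ≤ ∑ i ∈ Finset.range n, wordDist S (p i) (p (i + 1)) := by
  induction n with
  | zero => simpa using wordDist_self (S := S) (p 0)
  | succ n ih =>
    rw [Finset.sum_range_succ]
    exact le_trans (wordDist_triangle _ (p n) _) (add_le_add_left ih _)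

lemma wordLen_ne_top (hS : Subgroup.closure S = ⊤) (g : G) : wordLen S g ≠ ⊤ := by
  have hg : g ∈ (Subgroup.closure S).toSubmonoid := by
    rw [hS]; trivial
  rw [Subgroup.closure_toSubmonoid] at hg
  obtain ⟨l, hl, hp⟩ := Submonoid.exists_list_of_mem_closure hg
  have hl' : ∀ x ∈ l, x ∈ S ∨ x⁻¹ ∈ S := by
    intro x hx
    rcases hl x hx with h | h
    · exact Or.inl h
    · exact Or.inr h
  have := hp ▸ wordLen_le l hl'
  exact ne_top_of_le_ne_top (ENNReal.natCast_ne_top _) this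

end CoarseStmt

open CoarseStmt in
theorem controlled_coarse_section_gives_lipschitz_section
    {E G : Type*} [Group E] [Group G] (f : E →* G)
    (hfsurj : Function.Surjective f)
    (SZ : Set E) (SG : Set G) (SGhat : Set E)
    (hSZfin : SZ.Finite) (hSGfin : SG.Finite)
    (hSZker : Subgroup.closure SZ = f.ker)
    (hSGgen : Subgroup.closure SG = ⊤)
    (hlift : Set.BijOn f SGhat SG)
    (s' : G → E)
    (hs' : Controlled (wordDist SG) (wordDist (SZ ∪ SGhat)) s')
    (κ : ℝ≥0) (hclose : ∀ g : G, wordDist SG (f (s' g)) g ≤ (κ : ℝ≥0∞)) :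
    ∃ s : G → E, (∀ g : G, f (s g) = g) ∧
      (∀ g : G, wordDist (SZ ∪ SGhat) (s g) (s' g) ≤ (κ : ℝ≥0∞)) ∧
      ∃ L : ℝ≥0, ∀ g g' : G,
        wordDist (SZ ∪ SGhat) (s g) (s g') ≤ (L : ℝ≥0∞) * wordDist SG g g' := by
  classical
  obtain ⟨ρ, hρmono, hρtop, hρ⟩ := hs'
  set S' : Set E := SZ ∪ SGhat with hS'
  -- letter lifting
  let lift : G → E := fun y =>
    if h : y ∈ SG then (hlift.surjOn h).choose
    else if h' : y⁻¹ ∈ SG then ((hlift.surjOn h').choose)⁻¹ else 1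
  have hlift_spec : ∀ y : G, y ∈ SG ∨ y⁻¹ ∈ SG →
      f (lift y) = y ∧ (lift y ∈ SGhat ∨ (lift y)⁻¹ ∈ SGhat) := by
    intro y hy
    by_cases h : y ∈ SG
    · have hc := (hlift.surjOn h).choose_spec
      simp only [lift, dif_pos h]
      exact ⟨hc.2, Or.inl hc.1⟩
    · have h' : y⁻¹ ∈ SG := hy.resolve_left h
      have hc := (hlift.surjOn h').choose_spec
      simp only [lift, dif_neg h, dif_pos h']
      constructor
      · rw [map_inv, hc.2, inv_inv]
      · right; simpa using hc.1
  -- words realizing closeness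
  have hκfin : ∀ g : G, wordLen SG ((f (s' g))⁻¹ * g) ≠ ⊤ := fun g =>
    ne_top_of_le_ne_top ENNReal.coe_ne_top (hclose g)
  choose w hw1 hw2 hw3 using fun g => wordLen_exists_list (hκfin g)
  set s : G → E := fun g => s' g * ((w g).map lift).prod with hsdef
  -- section property
  have hmapf : ∀ g : G, ((w g).map lift).map f = w g := by
    intro g
    rw [List.map_map]
    have : ∀ x ∈ w g, (f ∘ lift) x = x := fun x hx => (hlift_spec x (hw1 g x hx)).1
    calc (w g).map (f ∘ lift) = (w g).map id := List.map_congr_left this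
      _ = w g := List.map_id _
  have hsec : ∀ g : G, f (s g) = g := by
    intro g
    simp only [s, map_mul]
    rw [map_list_prod, hmapf, hw2]
    group
  -- letters of lifted word
  have hletters : ∀ g : G, ∀ x ∈ (w g).map lift, x ∈ S' ∨ x⁻¹ ∈ S' := by
    intro g x hx
    obtain ⟨y, hy, rfl⟩ := List.mem_map.mp hx
    rcases (hlift_spec y (hw1 g y hy)).2 with h | h
    · exact Or.inl (Or.inr h)
    · exact Or.inr (Or.inr h)
  -- closeness
  have hcloseS : ∀ g : G, wordDist S' (s g) (s' g) ≤ (κ : ℝ≥0∞) := by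
    intro g
    have h1 : (s g)⁻¹ * s' g = (((w g).map lift).prod)⁻¹ := by
      simp only [s]; group
    calc wordDist S' (s g) (s' g) = wordLen S' (((w g).map lift).prod)⁻¹ := by
          rw [wordDist, h1]
      _ = wordLen S' ((w g).map lift).prod := wordLen_inv _
      _ ≤ (((w g).map lift).length : ℝ≥0∞) := wordLen_le _ (hletters g)
      _ = ((w g).length : ℝ≥0∞) := by rw [List.length_map]
      _ = wordLen SG ((f (s' g))⁻¹ * g) := hw3 g
      _ ≤ (κ : ℝ≥0∞) := hclose g
  -- one-step bound
  set L : ℝ≥0 := ρ 1 + 2 * κ with hLdef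
  have hstep : ∀ x y : G, wordDist SG x y ≤ 1 → wordDist S' (s x) (s y) ≤ (L : ℝ≥0∞) := by
    intro x y hd
    have hfin : wordDist SG x y ≠ ⊤ := ne_top_of_le_ne_top (by simp) hd
    have htn : (wordDist SG x y).toNNReal ≤ 1 := by
      have := ENNReal.toNNReal_mono (by simp) hd
      simpa using this
    have h2 : wordDist S' (s' x) (s' y) ≤ (ρ 1 : ℝ≥0∞) := by
      refine (hρ x y hfin).trans ?_
      exact_mod_cast hρmono htn
    have h1 : wordDist S' (s x) (s' x) ≤ (κ : ℝ≥0∞) := hcloseS x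
    have h3 : wordDist S' (s' y) (s y) ≤ (κ : ℝ≥0∞) := by
      rw [wordDist_symm]; exact hcloseS y
    calc wordDist S' (s x) (s y)
        ≤ wordDist S' (s x) (s' x) + wordDist S' (s' x) (s y) :=
          wordDist_triangle _ _ _
      _ ≤ wordDist S' (s x) (s' x) + (wordDist S' (s' x) (s' y) + wordDist S' (s' y) (s y)) :=
          add_le_add_right (wordDist_triangle _ _ _) _
      _ ≤ (κ : ℝ≥0∞) + ((ρ 1 : ℝ≥0∞) + (κ : ℝ≥0∞)) :=
          add_le_add h1 (add_le_add h2 h3)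
      _ = (L : ℝ≥0∞) := by rw [hLdef]; push_cast; ring
  refine ⟨s, hsec, hcloseS, L, ?_⟩
  intro g g'
  have hfin : wordLen SG (g⁻¹ * g') ≠ ⊤ := wordLen_ne_top hSGgen _
  obtain ⟨l, hl1, hl2, hl3⟩ := wordLen_exists_list hfin
  set n : ℕ := l.length with hn
  set p : ℕ → G := fun i => g * (l.take i).prod with hp
  have hp0 : p 0 = g := by simp [p]
  have hpn : p n = g' := by
    simp only [p, hn, List.take_length, hl2]
    group
  have hstep' : ∀ i ∈ Finset.range n, wordDist SG (p i) (p (i + 1)) ≤ 1 := by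
    intro i hi
    have hi' : i < l.length := Finset.mem_range.mp hi
    have hq : (p i)⁻¹ * p (i + 1) = l[i] := by
      simp only [p, List.prod_take_succ _ i hi']
      group
    have hmem : l[i] ∈ l := List.getElem_mem hi'
    have : wordLen SG (l[i]) ≤ ([l[i]].length : ℝ≥0∞) := by
      have := wordLen_le (S := SG) [l[i]] (by
        intro x hx
        simp only [List.mem_singleton] at hx
        subst hx
        exact hl1 _ hmem)
      simpa using this
    rw [wordDist, hq]
    simpa using this
  calc wordDist S' (s g) (s g')
      = wordDist S' (s (p 0)) (s (p n)) := by rw [hp0, hpn]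
    _ ≤ ∑ i ∈ Finset.range n, wordDist S' (s (p i)) (s (p (i + 1))) := by
        simpa using wordDist_chain S' (fun i => s (p i)) n
    _ ≤ ∑ _i ∈ Finset.range n, (L : ℝ≥0∞) :=
        Finset.sum_le_sum fun i hi => hstep _ _ (hstep' i hi)
    _ = (n : ℝ≥0∞) * L := by
        rw [Finset.sum_const, Finset.card_range]; simp [mul_comm]
    _ = (L : ℝ≥0∞) * wordDist SG g g' := by
        rw [wordDist, ← hl3, mul_comm]
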